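/- Let F = PΛP⁻¹ with Λ = diag(λ₁,…,λ_k) and all λ_i + λ_j ≠ 0. Then ∫₀ᵗ e^{Fv} Ψ e^{Fᵀv} dv = P ( M ∘ (P⁻¹ Ψ P⁻ᵀ) ) Pᵀ, where M_{ij} = (e^{t(λ_i+λ_j)} − 1)/(λ_i + λ_j) and ∘ denotes the Hadamard (entrywise) product. -/

import Mathlib

open Matrix NormedSpace in
private lemma aux_int_exp (c t : ℝ) (hc : c ≠ 0) :
    ∫ v in (0:ℝ)..t, Real.exp (v * c) = (Real.exp (t * c) - 1) / c := by
  rw [intervalIntegral.integral_comp_mul_right (fun x => Real.exp x) hc]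
  simp [integral_exp, div_eq_inv_mul]


open Matrix NormedSpace in
/-- If `F = PΛP⁻¹` with `Λ = diag(λ)` and `λᵢ + λⱼ ≠ 0` for all `i, j`, then
`∫₀ᵗ e^{Fv} Ψ e^{Fᵀv} dv = P (M ⊙ (P⁻¹ Ψ P⁻ᵀ)) Pᵀ`, where
`Mᵢⱼ = (e^{t(λᵢ+λⱼ)} − 1)/(λᵢ + λⱼ)` and `⊙` is the Hadamard product
(the integral being taken entrywise). -/
theorem integral_exp_sandwich_eigendecomposition
    {k : ℕ} (F P Ψ : Matrix (Fin k) (Fin k) ℝ) (lam : Fin k → ℝ)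
    (hP : IsUnit P)
    (hF : F = P * diagonal lam * P⁻¹)
    (hlam : ∀ i j, lam i + lam j ≠ 0) (t : ℝ) :
    ∀ i j,
      (∫ v in (0 : ℝ)..t, (exp (v • F) * Ψ * exp (v • Fᵀ)) i j) =
      (P * (Matrix.hadamard
          (Matrix.of fun i' j' =>
            (Real.exp (t * (lam i' + lam j')) - 1) / (lam i' + lam j'))
          (P⁻¹ * Ψ * (P⁻¹)ᵀ)) * Pᵀ) i j := by
  intro i j
  set C := P⁻¹ * Ψ * (P⁻¹)ᵀ with hC
  have hexp : ∀ v : ℝ, exp (v • F) =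
      P * diagonal (fun a => Real.exp (v * lam a)) * P⁻¹ := by
    intro v
    have h1 : v • F = P * diagonal (fun a => v * lam a) * P⁻¹ := by
      have hd : v • diagonal lam = diagonal (fun a => v * lam a) := by
        rw [← diagonal_smul]; rfl
      rw [hF, ← Matrix.smul_mul, ← Matrix.mul_smul, hd]
    rw [h1, Matrix.exp_conj _ _ hP, Matrix.exp_diagonal]
    congr 2
    funext a
    rw [Pi.exp_def, ← Real.exp_eq_exp_ℝ]
  have key : ∀ v : ℝ, (exp (v • F) * Ψ * exp (v • Fᵀ)) i j =
      ∑ b, ∑ a, P i a * C a b * P j b * Real.exp (v * (lam a + lam b)) := by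
    intro v
    have ht' : exp (v • Fᵀ) = (P⁻¹)ᵀ * diagonal (fun a => Real.exp (v * lam a)) * Pᵀ := by
      have h2 : v • Fᵀ = (v • F)ᵀ := by simp
      rw [h2, Matrix.exp_transpose, hexp v]
      simp [Matrix.transpose_mul, Matrix.mul_assoc, diagonal_transpose]
    have hm : exp (v • F) * Ψ * exp (v • Fᵀ) =
        P * (Matrix.of fun a b =>
          Real.exp (v * lam a) * C a b * Real.exp (v * lam b)) * Pᵀ := by
      have hDCD : diagonal (fun a => Real.exp (v * lam a)) * C *
          diagonal (fun a => Real.exp (v * lam a)) =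
          Matrix.of fun a b => Real.exp (v * lam a) * C a b * Real.exp (v * lam b) := by
        ext a b
        simp [mul_diagonal, diagonal_mul]
      rw [hexp v, ht', ← hDCD, hC]
      simp only [Matrix.mul_assoc]
    rw [hm]
    simp only [mul_apply, of_apply, transpose_apply, Finset.sum_mul]
    refine Finset.sum_congr rfl fun b _ => Finset.sum_congr rfl fun a _ => ?_
    rw [show v * (lam a + lam b) = v * lam a + v * lam b by ring, Real.exp_add]
    ring
  have hRHS : (P * (Matrix.hadamard
          (Matrix.of fun i' j' =>
            (Real.exp (t * (lam i' + lam j')) - 1) / (lam i' + lam j')) C) * Pᵀ) i j =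
      ∑ b, ∑ a, P i a * C a b * P j b *
        ((Real.exp (t * (lam a + lam b)) - 1) / (lam a + lam b)) := by
    simp only [mul_apply, hadamard_apply, of_apply, transpose_apply, Finset.sum_mul]
    refine Finset.sum_congr rfl fun b _ => Finset.sum_congr rfl fun a _ => ?_
    ring
  rw [hRHS, intervalIntegral.integral_congr (fun v _ => key v)]
  rw [intervalIntegral.integral_finset_sum]
  · refine Finset.sum_congr rfl fun b _ => ?_
    rw [intervalIntegral.integral_finset_sum]
    · refine Finset.sum_congr rfl fun a _ => ?_
      rw [intervalIntegral.integral_const_mul, aux_int_exp _ _ (hlam a b)]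
    · intro a _
      exact (Continuous.intervalIntegrable (by continuity) _ _)
  · intro b _
    apply Continuous.intervalIntegrable
    continuity
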